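/- Let G be a finite group and N a normal subgroup with G/N isomorphic to (ℤ/2ℤ) × (ℤ/2ℤ). Let ω₁ and ω₂ be two distinct nontrivial homomorphisms G → ℂˣ trivial on N, let N₁ = ker ω₁, and let ω₂₁ be the restriction of ω₂ to N₁. Suppose π₁ is an irreducible finite-dimensional complex representation of N₁ such that π₁ ⊗ ω₂₁ ≇ π₁ and π₁^g ≅ π₁ ⊗ ω₂₁ for some (equivalently, every) g ∈ G \ N₁. Then the induced representation π = Ind_{N₁}^G π₁ is an irreducible representation of G with Res_{N₁} π ≅ π₁ ⊕ (π₁ ⊗ ω₂₁) and Res_N π ≅ (Res_N π₁) ⊕ (Res_N π₁), i.e., π restricted to N is twice the irreducible representation Res_N π₁. -/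

import Mathlib

noncomputable section

namespace RestrictionMult

variable {G : Type*} [Group G]

/-- The submodule of equivariant linear maps between two representations. -/
def equivariantHoms {V W : Type*} [AddCommGroup V] [Module ℂ V]
    [AddCommGroup W] [Module ℂ W]
    (π : Representation ℂ G V) (σ : Representation ℂ G W) :
    Submodule ℂ (V →ₗ[ℂ] W) where
  carrier := {f | ∀ g v, f (π g v) = σ g (f v)}
  add_mem' := by intro f₁ f₂ h₁ h₂ g v; simp [h₁ g v, h₂ g v]
  zero_mem' := by intro g v; simp
  smul_mem' := by intro c f hf g v; simp [hf g v]

/-- Two representations are equivalent (isomorphic). -/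
def IsRepEquiv {V W : Type*} [AddCommGroup V] [Module ℂ V]
    [AddCommGroup W] [Module ℂ W]
    (π : Representation ℂ G V) (σ : Representation ℂ G W) : Prop :=
  ∃ e : V ≃ₗ[ℂ] W, ∀ g v, e (π g v) = σ g (e v)

/-- A representation is irreducible if the space is nonzero and the only invariant
submodules are `⊥` and `⊤`. -/
def IsIrreducibleRep {V : Type*} [AddCommGroup V] [Module ℂ V]
    (π : Representation ℂ G V) : Prop :=
  (∃ v : V, v ≠ 0) ∧
    ∀ U : Submodule ℂ V, (∀ g, ∀ v ∈ U, π g v ∈ U) → U = ⊥ ∨ U = ⊤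

/-- The twist of a representation by a character `χ : G →* ℂˣ`. -/
def twist {V : Type*} [AddCommGroup V] [Module ℂ V]
    (π : Representation ℂ G V) (χ : G →* ℂˣ) : Representation ℂ G V where
  toFun g := (χ g : ℂ) • π g
  map_one' := by simp
  map_mul' g h := by
    ext v
    simp only [Module.End.mul_apply, LinearMap.smul_apply, map_smul, map_mul, Units.val_mul,
      mul_smul]
    rw [smul_comm]

/-- The direct sum of two representations. -/
def dsum {V W : Type*} [AddCommGroup V] [Module ℂ V]
    [AddCommGroup W] [Module ℂ W]
    (π : Representation ℂ G V) (σ : Representation ℂ G W) :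
    Representation ℂ G (V × W) where
  toFun g := (π g).prodMap (σ g)
  map_one' := by ext v <;> simp
  map_mul' g h := by ext v <;> simp [Module.End.mul_apply]

/-- The subrepresentation on an invariant submodule. -/
def resSub {V : Type*} [AddCommGroup V] [Module ℂ V]
    (π : Representation ℂ G V) (U : Submodule ℂ V)
    (hU : ∀ g, ∀ v ∈ U, π g v ∈ U) : Representation ℂ G U where
  toFun g := (π g).restrict (fun v hv => hU g v hv)
  map_one' := by ext v; simp [LinearMap.restrict_apply]
  map_mul' g h := by ext v; simp [LinearMap.restrict_apply, Module.End.mul_apply]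

/-- The conjugate `π^g` of a representation of a normal subgroup `N`,
given by `x ↦ π (g⁻¹ x g)`. -/
def conjRep {N : Subgroup G} [N.Normal] {V : Type*} [AddCommGroup V] [Module ℂ V]
    (π : Representation ℂ N V) (g : G) : Representation ℂ N V :=
  π.comp (MulAut.conjNormal g⁻¹ : N ≃* N).toMonoidHom

/-- The space of the representation of `G` induced from a representation of a
subgroup `N`: functions `f : G → V` with `f (n * x) = π n (f x)`. -/
def indSubmodule (N : Subgroup G) {V : Type*} [AddCommGroup V] [Module ℂ V]
    (π : Representation ℂ N V) : Submodule ℂ (G → V) where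
  carrier := {f | ∀ (n : N) (x : G), f (n * x) = π n (f x)}
  add_mem' := by intro f₁ f₂ h₁ h₂ n x; simp [h₁ n x, h₂ n x]
  zero_mem' := by intro n x; simp
  smul_mem' := by intro c f hf n x; simp [hf n x]

/-- The representation of `G` induced from a representation `π` of a subgroup `N`,
acting by right translation on `indSubmodule N π`. -/
def ind (N : Subgroup G) {V : Type*} [AddCommGroup V] [Module ℂ V]
    (π : Representation ℂ N V) : Representation ℂ G (indSubmodule N π) where
  toFun g :=
    { toFun := fun f => ⟨fun x => (f : G → V) (x * g),
        fun n x => by simpa [mul_assoc] using f.2 n (x * g)⟩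
      map_add' := fun f₁ f₂ => by ext x; rfl
      map_smul' := fun c f => by ext x; rfl }
  map_one' := by ext f x; simp
  map_mul' g h := by ext f x; simp [Module.End.mul_apply, mul_assoc]



section Helpers

variable {H : Type*} [Group H]
variable {V W : Type*} [AddCommGroup V] [Module ℂ V] [AddCommGroup W] [Module ℂ W]

lemma IsRepEquiv.symm {π : Representation ℂ H V} {σ : Representation ℂ H W}
    (h : IsRepEquiv π σ) : IsRepEquiv σ π := by
  obtain ⟨e, he⟩ := h
  refine ⟨e.symm, fun g w => e.injective ?_⟩
  rw [he, e.apply_symm_apply, e.apply_symm_apply]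

lemma IsRepEquiv.trans {U : Type*} [AddCommGroup U] [Module ℂ U]
    {π : Representation ℂ H V} {σ : Representation ℂ H W} {τ : Representation ℂ H U}
    (h₁ : IsRepEquiv π σ) (h₂ : IsRepEquiv σ τ) : IsRepEquiv π τ := by
  obtain ⟨e₁, he₁⟩ := h₁
  obtain ⟨e₂, he₂⟩ := h₂
  exact ⟨e₁.trans e₂, fun g v => by simp [he₁, he₂]⟩

lemma IsRepEquiv.irr {π : Representation ℂ H V} {σ : Representation ℂ H W}
    (h : IsRepEquiv π σ) (hπ : IsIrreducibleRep π) : IsIrreducibleRep σ := by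
  obtain ⟨e, he⟩ := h
  constructor
  · obtain ⟨v, hv⟩ := hπ.1
    exact ⟨e v, fun h0 => hv (by simpa using e.injective (by simpa using h0))⟩
  · intro M hM
    have hU : ∀ g, ∀ v ∈ M.comap (e : V →ₗ[ℂ] W), π g v ∈ M.comap (e : V →ₗ[ℂ] W) := by
      intro g v hv
      simp only [Submodule.mem_comap, LinearEquiv.coe_coe] at hv ⊢
      rw [he]
      exact hM g _ hv
    rcases hπ.2 _ hU with h0 | h0
    · left
      rw [eq_bot_iff]
      intro w hw
      have : e.symm w ∈ M.comap (e : V →ₗ[ℂ] W) := by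
        simp only [Submodule.mem_comap, LinearEquiv.coe_coe, e.apply_symm_apply]
        exact hw
      rw [h0] at this
      simpa using congrArg e this
    · right
      rw [eq_top_iff]
      intro w _
      have : e.symm w ∈ M.comap (e : V →ₗ[ℂ] W) := h0 ▸ Submodule.mem_top
      simpa using this

lemma twist_irr {π : Representation ℂ H V} (χ : H →* ℂˣ)
    (hπ : IsIrreducibleRep π) : IsIrreducibleRep (twist π χ) := by
  refine ⟨hπ.1, fun U hU => hπ.2 U fun g v hv => ?_⟩
  have h1 : (χ g : ℂ) • π g v ∈ U := hU g v hv
  have h2 : ((χ g)⁻¹ : ℂˣ) • ((χ g : ℂ) • π g v) ∈ U := U.smul_mem _ h1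
  simpa [Units.smul_def, smul_smul] using h2

lemma twist_apply (π : Representation ℂ H V) (χ : H →* ℂˣ) (g : H) (v : V) :
    twist π χ g v = (χ g : ℂ) • π g v := rfl

lemma dsum_apply (π : Representation ℂ H V) (σ : Representation ℂ H W) (g : H) (p : V × W) :
    dsum π σ g p = (π g p.1, σ g p.2) := rfl

lemma pair_cases {π : Representation ℂ H V} {σ : Representation ℂ H W}
    (hπ : IsIrreducibleRep π) (hσ : IsIrreducibleRep σ)
    (hne : ¬ IsRepEquiv π σ)
    (P : Submodule ℂ (V × W)) (hP : ∀ h, ∀ p ∈ P, dsum π σ h p ∈ P) :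
    P = ⊥ ∨ P = Submodule.prod ⊤ ⊥ ∨ P = Submodule.prod ⊥ ⊤ ∨ P = ⊤ := by
  have hA : ∀ g, ∀ v ∈ P.comap (LinearMap.inl ℂ V W), π g v ∈ P.comap (LinearMap.inl ℂ V W) := by
    intro g v hv
    simp only [Submodule.mem_comap, LinearMap.inl_apply] at hv ⊢
    simpa [dsum_apply] using hP g _ hv
  have hB : ∀ g, ∀ w ∈ P.comap (LinearMap.inr ℂ V W), σ g w ∈ P.comap (LinearMap.inr ℂ V W) := by
    intro g w hw
    simp only [Submodule.mem_comap, LinearMap.inr_apply] at hw ⊢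
    simpa [dsum_apply] using hP g _ hw
  have hA' : ∀ g, ∀ v ∈ P.map (LinearMap.fst ℂ V W), π g v ∈ P.map (LinearMap.fst ℂ V W) := by
    rintro g v ⟨p, hp, rfl⟩
    exact ⟨dsum π σ g p, hP g p hp, rfl⟩
  have hB' : ∀ g, ∀ w ∈ P.map (LinearMap.snd ℂ V W), σ g w ∈ P.map (LinearMap.snd ℂ V W) := by
    rintro g w ⟨p, hp, rfl⟩
    exact ⟨dsum π σ g p, hP g p hp, rfl⟩
  have memA : ∀ v : V, v ∈ P.comap (LinearMap.inl ℂ V W) ↔ (v, (0:W)) ∈ P := fun v => Iff.rfl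
  have memB : ∀ w : W, w ∈ P.comap (LinearMap.inr ℂ V W) ↔ ((0:V), w) ∈ P := fun w => Iff.rfl
  rcases hπ.2 _ hA with hAb | hAt
  · rcases hσ.2 _ hB with hBb | hBt
    · -- A = ⊥, B = ⊥ : P = ⊥ or contradiction
      left
      by_contra hP0
      have hB0 : ∀ w : W, ((0:V), w) ∈ P → w = 0 := by
        intro w hw
        have : w ∈ P.comap (LinearMap.inr ℂ V W) := (memB w).mpr hw
        rw [hBb] at this; simpa using this
      have hA0 : ∀ v : V, (v, (0:W)) ∈ P → v = 0 := by
        intro v hv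
        have : v ∈ P.comap (LinearMap.inl ℂ V W) := (memA v).mpr hv
        rw [hAb] at this; simpa using this
      have hA'top : P.map (LinearMap.fst ℂ V W) = ⊤ := by
        rcases hπ.2 _ hA' with h0 | h0
        · exfalso; apply hP0
          rw [eq_bot_iff]; intro p hp
          have h1 : p.1 = 0 := by
            have : p.1 ∈ P.map (LinearMap.fst ℂ V W) := ⟨p, hp, rfl⟩
            rw [h0] at this; simpa using this
          have h2 : p.2 = 0 := hB0 p.2 (by
            have hp' : (p.1, p.2) ∈ P := by rwa [Prod.mk.eta]
            rwa [h1] at hp')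
          simp [Submodule.mem_bot, Prod.ext_iff, h1, h2]
        · exact h0
      have hB'top : P.map (LinearMap.snd ℂ V W) = ⊤ := by
        rcases hσ.2 _ hB' with h0 | h0
        · exfalso; apply hP0
          rw [eq_bot_iff]; intro p hp
          have h2 : p.2 = 0 := by
            have : p.2 ∈ P.map (LinearMap.snd ℂ V W) := ⟨p, hp, rfl⟩
            rw [h0] at this; simpa using this
          have h1 : p.1 = 0 := hA0 p.1 (by
            have hp' : (p.1, p.2) ∈ P := by rwa [Prod.mk.eta]
            rwa [h2] at hp')
          simp [Submodule.mem_bot, Prod.ext_iff, h1, h2]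
        · exact h0
      -- build equivariant iso
      set F : P →ₗ[ℂ] V := (LinearMap.fst ℂ V W).comp P.subtype with hF
      have hFinj : Function.Injective F := by
        intro p q hpq
        have h1 : (p:V×W).1 = (q:V×W).1 := hpq
        have h2 : ((0:V), (p:V×W).2 - (q:V×W).2) ∈ P := by
          have := P.sub_mem p.2 q.2
          have heq : ((p:V×W) - (q:V×W)) = ((0:V), (p:V×W).2 - (q:V×W).2) := by
            rw [Prod.ext_iff]; constructor
            · simpa using congrArg (fun x => x - (q:V×W).1) h1
            · rfl
          rwa [heq] at this
        have := hB0 _ h2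
        have h3 : (p:V×W).2 = (q:V×W).2 := by
          have := sub_eq_zero.mp this; exact this
        exact Subtype.ext (Prod.ext h1 h3)
      have hFsurj : Function.Surjective F := by
        intro v
        have : v ∈ P.map (LinearMap.fst ℂ V W) := hA'top ▸ Submodule.mem_top
        obtain ⟨p, hp, hpv⟩ := this
        exact ⟨⟨p, hp⟩, hpv⟩
      set q := LinearEquiv.ofBijective F ⟨hFinj, hFsurj⟩ with hq
      set e : V →ₗ[ℂ] W := ((LinearMap.snd ℂ V W).comp P.subtype).comp (q.symm : V →ₗ[ℂ] P) with he
      have hkey : ∀ v : V, ((q.symm v : P) : V × W) = (v, e v) := by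
        intro v
        have h1 : F (q.symm v) = v := q.apply_symm_apply v
        exact Prod.ext h1 rfl
      have hmem : ∀ v : V, (v, e v) ∈ P := fun v => hkey v ▸ (q.symm v).2
      have hediff : ∀ v w, (v, w) ∈ P → w = e v := by
        intro v w hw
        have : ((0:V), w - e v) ∈ P := by
          have := P.sub_mem hw (hmem v)
          simpa using this
        have := hB0 _ this
        exact sub_eq_zero.mp this
      have heinj : Function.Injective e := by
        intro v v' hvv'
        have h1 : (v - v', (0:W)) ∈ P := by
          have := P.sub_mem (hmem v) (hmem v')
          simpa [hvv'] using this
        exact sub_eq_zero.mp (hA0 _ h1)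
      have hesurj : Function.Surjective e := by
        intro w
        have : w ∈ P.map (LinearMap.snd ℂ V W) := hB'top ▸ Submodule.mem_top
        obtain ⟨p, hp, hpw⟩ := this
        exact ⟨p.1, (hediff p.1 p.2 (by rwa [Prod.mk.eta])).symm.trans hpw⟩
      refine absurd ⟨LinearEquiv.ofBijective e ⟨heinj, hesurj⟩, fun g v => ?_⟩ hne
      show e (π g v) = σ g (e v)
      have h1 : (π g v, σ g (e v)) ∈ P := by
        have := hP g _ (hmem v)
        simpa [dsum_apply] using this
      exact (hediff _ _ h1).symm
    · -- A = ⊥, B = ⊤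
      have hBmem : ∀ w : W, ((0:V), w) ∈ P := by
        intro w; have : w ∈ P.comap (LinearMap.inr ℂ V W) := hBt ▸ Submodule.mem_top
        exact this
      rcases hπ.2 _ hA' with h0 | h0
      · -- fst image ⊥ : P = prod ⊥ ⊤
        right; right; left
        ext p
        simp only [Submodule.mem_prod, Submodule.mem_bot, Submodule.mem_top, and_true]
        constructor
        · intro hp
          have : p.1 ∈ P.map (LinearMap.fst ℂ V W) := ⟨p, hp, rfl⟩
          rw [h0] at this; simpa using this
        · intro hp
          have := hBmem p.2
          rwa [← hp, Prod.mk.eta] at this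
      · -- fst image ⊤ : P = ⊤
        right; right; right
        rw [eq_top_iff]
        rintro p -
        have : p.1 ∈ P.map (LinearMap.fst ℂ V W) := h0 ▸ Submodule.mem_top
        obtain ⟨r, hr, hrp⟩ := this
        have h1 : ((0:V), p.2 - r.2) ∈ P := hBmem _
        have := P.add_mem hr h1
        have heq : r + ((0:V), p.2 - r.2) = p := by
          rw [Prod.ext_iff]
          exact ⟨by simpa using hrp, by simp⟩
        rwa [heq] at this
  · -- A = ⊤
    have hAmem : ∀ v : V, (v, (0:W)) ∈ P := by
      intro v; have : v ∈ P.comap (LinearMap.inl ℂ V W) := hAt ▸ Submodule.mem_top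
      exact this
    rcases hσ.2 _ hB with hBb | hBt
    · rcases hσ.2 _ hB' with h0 | h0
      · -- snd image ⊥ : P = prod ⊤ ⊥
        right; left
        ext p
        simp only [Submodule.mem_prod, Submodule.mem_bot, Submodule.mem_top, true_and]
        constructor
        · intro hp
          have : p.2 ∈ P.map (LinearMap.snd ℂ V W) := ⟨p, hp, rfl⟩
          rw [h0] at this; simpa using this
        · intro hp
          have := hAmem p.1
          rwa [← hp, Prod.mk.eta] at this
      · -- snd image ⊤ : P = ⊤
        right; right; right
        rw [eq_top_iff]
        rintro p -
        have : p.2 ∈ P.map (LinearMap.snd ℂ V W) := h0 ▸ Submodule.mem_top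
        obtain ⟨r, hr, hrp⟩ := this
        have h1 : (p.1 - r.1, (0:W)) ∈ P := hAmem _
        have := P.add_mem hr h1
        have heq : r + (p.1 - r.1, (0:W)) = p := by
          rw [Prod.ext_iff]
          exact ⟨by simp, by simpa using hrp⟩
        rwa [heq] at this
    · -- A = ⊤, B = ⊤ : P = ⊤
      right; right; right
      rw [eq_top_iff]
      rintro p -
      have h1 : (p.1, (0:W)) ∈ P := hAmem p.1
      have h2 : ((0:V), p.2) ∈ P := by
        have : p.2 ∈ P.comap (LinearMap.inr ℂ V W) := by rw [hBt]; trivial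
        exact this
      have := P.add_mem h1 h2
      simpa using this

end Helpers


section Phi

variable {V : Type*} [AddCommGroup V] [Module ℂ V]

open Classical in
/-- Evaluation at `1` and at `g₀` identifies the induced module with `V × V`
when `N₁` has index two witnessed by `g₀`. -/
def phiEquiv (N₁ : Subgroup G) (π₁ : Representation ℂ N₁ V) (g₀ : G)
    (hg₀ : g₀ ∉ N₁) (hcov : ∀ x : G, x ∉ N₁ → x * g₀⁻¹ ∈ N₁) :
    indSubmodule N₁ π₁ ≃ₗ[ℂ] V × V where
  toFun f := ((f : G → V) 1, (f : G → V) g₀)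
  map_add' f₁ f₂ := rfl
  map_smul' c f := rfl
  invFun p := ⟨fun x => if hx : x ∈ N₁ then π₁ ⟨x, hx⟩ p.1 else π₁ ⟨x * g₀⁻¹, hcov x hx⟩ p.2, by
    intro n x
    by_cases hx : x ∈ N₁
    · have hnx : (↑n : G) * x ∈ N₁ := N₁.mul_mem n.2 hx
      simp only [dif_pos hx, dif_pos hnx]
      have he : (⟨(↑n : G) * x, hnx⟩ : N₁) = n * ⟨x, hx⟩ := rfl
      rw [he, map_mul, Module.End.mul_apply]
    · have hnx : ¬ ((↑n : G) * x ∈ N₁) := fun h => hx (by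
        have := N₁.mul_mem (N₁.inv_mem n.2) h
        simpa [← mul_assoc] using this)
      simp only [dif_neg hx, dif_neg hnx]
      have he : (⟨(↑n : G) * x * g₀⁻¹, hcov _ hnx⟩ : N₁) = n * ⟨x * g₀⁻¹, hcov x hx⟩ := by
        apply Subtype.ext
        simp [mul_assoc]
      rw [he, map_mul, Module.End.mul_apply]⟩
  left_inv f := by
    apply Subtype.ext
    funext x
    show (if hx : x ∈ N₁ then π₁ ⟨x, hx⟩ ((f : G → V) 1)
        else π₁ ⟨x * g₀⁻¹, hcov x hx⟩ ((f : G → V) g₀)) = (f : G → V) x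
    by_cases hx : x ∈ N₁
    · rw [dif_pos hx]
      have := f.2 ⟨x, hx⟩ 1
      rw [mul_one] at this
      exact this.symm
    · rw [dif_neg hx]
      have := f.2 ⟨x * g₀⁻¹, hcov x hx⟩ g₀
      have hxe : x * g₀⁻¹ * g₀ = x := inv_mul_cancel_right x g₀
      rw [show ((⟨x * g₀⁻¹, hcov x hx⟩ : N₁) : G) * g₀ = x from hxe] at this
      exact this.symm
  right_inv p := by
    apply Prod.ext
    · show (if hx : (1:G) ∈ N₁ then π₁ ⟨1, hx⟩ p.1 else _) = p.1
      rw [dif_pos N₁.one_mem]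
      rw [show (⟨(1:G), N₁.one_mem⟩ : N₁) = 1 from rfl, map_one]
      rfl
    · show (if hx : g₀ ∈ N₁ then π₁ ⟨g₀, hx⟩ p.1 else π₁ ⟨g₀ * g₀⁻¹, hcov g₀ hx⟩ p.2) = p.2
      rw [dif_neg hg₀]
      have he : (⟨g₀ * g₀⁻¹, hcov g₀ hg₀⟩ : N₁) = 1 := by
        apply Subtype.ext
        simp
      rw [he, map_one]
      rfl

end Phi

/-- With `N ⊴ G`, `G/N ≅ ℤ/2 × ℤ/2`, distinct nontrivial characters
`ω₁, ω₂` of `G` trivial on `N`, `N₁ = ker ω₁` and `ω₂₁ = ω₂|_{N₁}`, suppose `π₁` is an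
irreducible complex representation of `N₁` with `π₁ ⊗ ω₂₁ ≇ π₁` and
`π₁^g ≅ π₁ ⊗ ω₂₁` for every `g ∈ G \ N₁`.  Then `π = Ind_{N₁}^G π₁` is irreducible,
`Res_{N₁} π ≅ π₁ ⊕ (π₁ ⊗ ω₂₁)`, and `Res_N π ≅ (Res_N π₁) ⊕ (Res_N π₁)` with
`Res_N π₁` irreducible. -/
theorem induced_restricts_to_twice_irreducible
    {G : Type*} [Group G] [Finite G] (N : Subgroup G) [N.Normal]
    (hquot : Nonempty ((G ⧸ N) ≃* Multiplicative (ZMod 2) × Multiplicative (ZMod 2)))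
    (ω₁ ω₂ : G →* ℂˣ) (hne : ω₁ ≠ ω₂) (hω₁ : ω₁ ≠ 1) (hω₂ : ω₂ ≠ 1)
    (hω₁N : ∀ n ∈ N, ω₁ n = 1) (hω₂N : ∀ n ∈ N, ω₂ n = 1)
    {V₁ : Type*} [AddCommGroup V₁] [Module ℂ V₁] [FiniteDimensional ℂ V₁]
    (π₁ : Representation ℂ ω₁.ker V₁) (hπ₁ : IsIrreducibleRep π₁)
    (htw : ¬ IsRepEquiv (twist π₁ (ω₂.comp ω₁.ker.subtype)) π₁)
    (hconj : ∀ g : G, g ∉ ω₁.ker →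
      IsRepEquiv (conjRep π₁ g) (twist π₁ (ω₂.comp ω₁.ker.subtype))) :
    IsIrreducibleRep (ind ω₁.ker π₁) ∧
    IsRepEquiv ((ind ω₁.ker π₁).comp ω₁.ker.subtype)
      (dsum π₁ (twist π₁ (ω₂.comp ω₁.ker.subtype))) ∧
    IsIrreducibleRep
      (π₁.comp (Subgroup.inclusion (fun x hx => MonoidHom.mem_ker.mpr (hω₁N x hx)))) ∧
    IsRepEquiv ((ind ω₁.ker π₁).comp N.subtype)
      (dsum (π₁.comp (Subgroup.inclusion (fun x hx => MonoidHom.mem_ker.mpr (hω₁N x hx))))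
        (π₁.comp (Subgroup.inclusion (fun x hx => MonoidHom.mem_ker.mpr (hω₁N x hx))))) := by
  -- ## Group-theoretic preliminaries
  obtain ⟨eqv⟩ := hquot
  -- every square lies in N
  have hsqN : ∀ g : G, g * g ∈ N := by
    intro g
    have h2 : ∀ m : Multiplicative (ZMod 2) × Multiplicative (ZMod 2), m * m = 1 := by decide
    have : ((g * g : G) : G ⧸ N) = 1 := by
      apply eqv.injective
      rw [map_one]
      have : ((g * g : G) : G ⧸ N) = ((g : G ⧸ N) * (g : G ⧸ N)) := rfl
      rw [this, map_mul]
      exact h2 _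
    exact (QuotientGroup.eq_one_iff _).mp this
  -- characters take values ±1
  have hval : ∀ (ω : G →* ℂˣ), (∀ n ∈ N, ω n = 1) → ∀ g : G, ω g = 1 ∨ ω g = -1 := by
    intro ω hN g
    have h1 : ω g * ω g = 1 := by rw [← map_mul]; exact hN _ (hsqN g)
    have h1' : ((ω g : ℂ) - 1) * ((ω g : ℂ) + 1) = 0 := by
      have := congrArg (fun u : ℂˣ => (u : ℂ)) h1
      simp only [Units.val_mul, Units.val_one] at this
      ring_nf
      linear_combination this
    rcases mul_eq_zero.mp h1' with h | h
    · left; ext; rw [Units.val_one]; linear_combination h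
    · right; ext
      rw [Units.val_neg, Units.val_one]
      linear_combination h
  have hv₁ := hval ω₁ hω₁N
  have hv₂ := hval ω₂ hω₂N
  have hm1 : (-1 : ℂˣ) ≠ 1 := by
    intro hcon
    have := congrArg (fun u : ℂˣ => (u : ℂ)) hcon
    norm_num at this
  -- Klein four-group covering fact
  have klein : ∀ a b c : Multiplicative (ZMod 2) × Multiplicative (ZMod 2),
      a = 1 ∨ b = 1 ∨ a = b ∨ c = 1 ∨ c = a ∨ c = b ∨ c = a * b := by
    have h : ∀ a b c : ZMod 2 × ZMod 2,
        a = 0 ∨ b = 0 ∨ a = b ∨ c = 0 ∨ c = a ∨ c = b ∨ c = a + b := by decide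
    intro a b c
    have hf : Function.Injective
        (fun x : Multiplicative (ZMod 2) × Multiplicative (ZMod 2) => (x.1.toAdd, x.2.toAdd)) := by
      intro x y hxy
      exact Prod.ext (Multiplicative.toAdd.injective (congrArg Prod.fst hxy))
        (Multiplicative.toAdd.injective (congrArg Prod.snd hxy))
    rcases h (a.1.toAdd, a.2.toAdd) (b.1.toAdd, b.2.toAdd) (c.1.toAdd, c.2.toAdd) with
      h'|h'|h'|h'|h'|h'|h'
    · exact Or.inl (hf h')
    · exact Or.inr (Or.inl (hf h'))
    · exact Or.inr (Or.inr (Or.inl (hf h')))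
    · exact Or.inr (Or.inr (Or.inr (Or.inl (hf h'))))
    · exact Or.inr (Or.inr (Or.inr (Or.inr (Or.inl (hf h')))))
    · exact Or.inr (Or.inr (Or.inr (Or.inr (Or.inr (Or.inl (hf h'))))))
    · exact Or.inr (Or.inr (Or.inr (Or.inr (Or.inr (Or.inr (hf h'))))))
  -- kernel characterisation of a nontrivial character vanishing at x ∉ N
  have kerchar : ∀ (ω : G →* ℂˣ), ω ≠ 1 → (∀ n ∈ N, ω n = 1) →
      ∀ x : G, x ∉ N → ω x = 1 → ∀ g : G, (ω g = 1 ↔ (g ∈ N ∨ x⁻¹ * g ∈ N)) := by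
    intro ω hω hN x hxN hωx g
    constructor
    · intro hg
      by_contra hcon
      push_neg at hcon
      obtain ⟨hg1, hg2⟩ := hcon
      apply hω
      suffices key : ∀ t : G, ω t = 1 by
        ext t
        rw [key t]
        rfl
      intro t
      have ha : eqv (x : G ⧸ N) ≠ 1 := by
        intro hcon'
        apply hxN
        have : (x : G ⧸ N) = 1 := by
          apply eqv.injective; rw [hcon', map_one]
        exact (QuotientGroup.eq_one_iff _).mp this
      have hb : eqv (g : G ⧸ N) ≠ 1 := by
        intro hcon'
        apply hg1
        have : (g : G ⧸ N) = 1 := by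
          apply eqv.injective; rw [hcon', map_one]
        exact (QuotientGroup.eq_one_iff _).mp this
      have hab : eqv (x : G ⧸ N) ≠ eqv (g : G ⧸ N) := by
        intro hcon'
        exact hg2 (QuotientGroup.eq.mp (eqv.injective hcon'))
      rcases klein (eqv (x : G ⧸ N)) (eqv (g : G ⧸ N)) (eqv (t : G ⧸ N)) with
        h'|h'|h'|h'|h'|h'|h'
      · exact absurd h' ha
      · exact absurd h' hb
      · exact absurd h' hab
      · have : (t : G ⧸ N) = 1 := by apply eqv.injective; rw [h', map_one]
        exact hN t ((QuotientGroup.eq_one_iff _).mp this)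
      · have : x⁻¹ * t ∈ N := QuotientGroup.eq.mp (eqv.injective h').symm
        have hdec : ω t = ω x * ω (x⁻¹ * t) := by rw [← map_mul, mul_inv_cancel_left]
        rw [hdec, hωx, hN _ this, one_mul]
      · have : g⁻¹ * t ∈ N := QuotientGroup.eq.mp (eqv.injective h').symm
        have hdec : ω t = ω g * ω (g⁻¹ * t) := by rw [← map_mul, mul_inv_cancel_left]
        rw [hdec, hg, hN _ this, one_mul]
      · have hmul : eqv (x : G ⧸ N) * eqv (g : G ⧸ N) = eqv ((x * g : G) : G ⧸ N) := by
          rw [← map_mul]; rfl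
        rw [hmul] at h'
        have : (x * g)⁻¹ * t ∈ N := QuotientGroup.eq.mp (eqv.injective h').symm
        have hdec : ω t = ω (x * g) * ω ((x * g)⁻¹ * t) := by rw [← map_mul, mul_inv_cancel_left]
        rw [hdec, hN _ this, map_mul, hωx, hg, one_mul, one_mul]
    · rintro (hgN | hgN)
      · exact hN g hgN
      · have : ω (x * (x⁻¹ * g)) = 1 := by rw [map_mul, hωx, hN _ hgN, one_mul]
        rwa [mul_inv_cancel_left] at this
  -- common kernel of ω₁ and ω₂ is N
  have hNN : ∀ x : G, ω₁ x = 1 → ω₂ x = 1 → x ∈ N := by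
    intro x h1 h2
    by_contra hxN
    apply hne
    ext g
    have e1 := kerchar ω₁ hω₁ hω₁N x hxN h1 g
    have e2 := kerchar ω₂ hω₂ hω₂N x hxN h2 g
    rcases hv₁ g with k1 | k1 <;> rcases hv₂ g with k2 | k2
    · rw [k1, k2]
    · exact absurd (e2.mpr (e1.mp k1)) (by rw [k2]; exact fun hc => hm1 hc)
    · exact absurd (e1.mpr (e2.mp k2)) (by rw [k1]; exact fun hc => hm1 hc)
    · rw [k1, k2]
  -- existence of an element of N₁ with ω₂ = -1
  have hh : ∃ h : G, ω₁ h = 1 ∧ ω₂ h = -1 := by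
    by_contra hcon
    push_neg at hcon
    have hsub : ∀ t : G, ω₁ t = 1 → ω₂ t = 1 := fun t h1 =>
      (hv₂ t).resolve_right (hcon t h1)
    apply hne
    obtain ⟨k, hk⟩ : ∃ k : G, ω₂ k ≠ 1 := by
      by_contra hc
      push_neg at hc
      exact hω₂ (by ext g; rw [hc g]; rfl)
    have hk2 : ω₂ k = -1 := (hv₂ k).resolve_left hk
    have hk1 : ω₁ k = -1 := by
      rcases hv₁ k with h | h
      · exact absurd (hsub k h) hk
      · exact h
    ext g
    rcases hv₁ g with h | h
    · rw [h, hsub g h]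
    · rw [h]
      rcases hv₂ g with h2 | h2
      · exfalso
        have hgk : ω₁ (g * k) = 1 := by rw [map_mul, h, hk1]; simp
        have := hsub _ hgk
        rw [map_mul, h2, hk2, one_mul] at this
        exact hm1 this
      · rw [h2]
  -- choice of g₀ ∉ N₁
  obtain ⟨g₀, hg₀⟩ : ∃ g₀ : G, ω₁ g₀ ≠ 1 := by
    by_contra hc
    push_neg at hc
    exact hω₁ (by ext g; rw [hc g]; rfl)
  have hg₀m : ω₁ g₀ = -1 := (hv₁ g₀).resolve_left hg₀
  have hg₀ker : g₀ ∉ ω₁.ker := by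
    rw [MonoidHom.mem_ker]; exact hg₀
  have hcov : ∀ x : G, x ∉ ω₁.ker → x * g₀⁻¹ ∈ ω₁.ker := by
    intro x hx
    rw [MonoidHom.mem_ker] at hx ⊢
    have hxm : ω₁ x = -1 := (hv₁ x).resolve_left hx
    rw [map_mul, map_inv, hxm, hg₀m]
    simp
  have hg₀inv : g₀⁻¹ ∉ ω₁.ker := by
    intro hc
    apply hg₀ker
    rw [MonoidHom.mem_ker] at hc ⊢
    rw [map_inv, inv_eq_one] at hc
    exact hc
  have hg₄ : g₀ * g₀ ∈ ω₁.ker := by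
    rw [MonoidHom.mem_ker, map_mul, hg₀m]
    simp
  set g₄ : ω₁.ker := ⟨g₀ * g₀, hg₄⟩ with hg₄def
  -- ## Representation-theoretic setup
  set Φ := phiEquiv ω₁.ker π₁ g₀ hg₀ker hcov with hΦdef
  have key1 : ∀ (n : ω₁.ker) (f : indSubmodule ω₁.ker π₁),
      Φ (ind ω₁.ker π₁ ↑n f) = dsum π₁ (conjRep π₁ g₀⁻¹) n (Φ f) := by
    intro n f
    apply Prod.ext
    · show (f : G → V₁) (1 * ↑n) = π₁ n ((f : G → V₁) 1)
      rw [one_mul]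
      have := f.2 n 1
      rwa [mul_one] at this
    · show (f : G → V₁) (g₀ * ↑n) = conjRep π₁ g₀⁻¹ n ((f : G → V₁) g₀)
      have hmem : g₀ * ↑n * g₀⁻¹ ∈ ω₁.ker := by
        rw [MonoidHom.mem_ker, map_mul, map_mul, map_inv]
        rw [MonoidHom.mem_ker.mp n.2]
        simp
      have hf2 := f.2 ⟨g₀ * ↑n * g₀⁻¹, hmem⟩ g₀
      rw [show ((⟨g₀ * ↑n * g₀⁻¹, hmem⟩ : ω₁.ker) : G) * g₀ = g₀ * ↑n by
        show g₀ * ↑n * g₀⁻¹ * g₀ = g₀ * ↑n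
        group] at hf2
      rw [hf2]
      have harg : (⟨g₀ * ↑n * g₀⁻¹, hmem⟩ : ω₁.ker)
          = (MulAut.conjNormal (g₀⁻¹)⁻¹ : MulAut ω₁.ker) n := by
        apply Subtype.ext
        rw [MulAut.conjNormal_apply]
        rw [inv_inv]
      rw [harg]
      rfl
  have key2 : ∀ f : indSubmodule ω₁.ker π₁,
      Φ (ind ω₁.ker π₁ g₀ f) = ((f : G → V₁) g₀, π₁ g₄ ((f : G → V₁) 1)) := by
    intro f
    apply Prod.ext
    · show (f : G → V₁) (1 * g₀) = (f : G → V₁) g₀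
      rw [one_mul]
    · show (f : G → V₁) (g₀ * g₀) = π₁ g₄ ((f : G → V₁) 1)
      have := f.2 g₄ 1
      rwa [show ((g₄ : G) * 1 : G) = g₀ * g₀ from mul_one _] at this
  have hρtw : IsRepEquiv (conjRep π₁ g₀⁻¹) (twist π₁ (ω₂.comp ω₁.ker.subtype)) :=
    hconj g₀⁻¹ hg₀inv
  have htwirr : IsIrreducibleRep (twist π₁ (ω₂.comp ω₁.ker.subtype)) :=
    twist_irr _ hπ₁
  have hρirr : IsIrreducibleRep (conjRep π₁ g₀⁻¹) := hρtw.symm.irr htwirr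
  have hneqv : ¬ IsRepEquiv π₁ (conjRep π₁ g₀⁻¹) := fun hcon =>
    htw (hcon.trans hρtw).symm
  -- the intertwiner for statements 2 and 4
  obtain ⟨e, he⟩ := hρtw
  set E := LinearEquiv.trans Φ (LinearEquiv.prodCongr (LinearEquiv.refl ℂ V₁) e) with hEdef
  have hE : ∀ (n : ω₁.ker) (f : indSubmodule ω₁.ker π₁),
      E (ind ω₁.ker π₁ ↑n f) = dsum π₁ (twist π₁ (ω₂.comp ω₁.ker.subtype)) n (E f) := by
    intro n f
    have h1 : E (ind ω₁.ker π₁ ↑n f)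
        = ((Φ (ind ω₁.ker π₁ ↑n f)).1, e ((Φ (ind ω₁.ker π₁ ↑n f)).2)) := rfl
    have h2 : E f = ((Φ f).1, e ((Φ f).2)) := rfl
    rw [h1, h2, key1 n f]
    apply Prod.ext
    · rfl
    · show e (conjRep π₁ g₀⁻¹ n ((Φ f).2)) = _
      rw [he]
      rfl
  refine ⟨?_, ⟨E, fun n f => hE n f⟩, ?_, ?_⟩
  · -- ## Statement 1 : irreducibility of the induced representation
    constructor
    · obtain ⟨v, hv⟩ := hπ₁.1
      refine ⟨Φ.symm (v, 0), fun h0 => hv ?_⟩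
      have := congrArg Φ h0
      rw [Φ.apply_symm_apply, map_zero] at this
      exact congrArg Prod.fst this
    · intro U hU
      have hPinv : ∀ (n : ω₁.ker), ∀ p ∈ U.map (Φ : indSubmodule ω₁.ker π₁ →ₗ[ℂ] V₁ × V₁),
          dsum π₁ (conjRep π₁ g₀⁻¹) n p ∈ U.map (Φ : indSubmodule ω₁.ker π₁ →ₗ[ℂ] V₁ × V₁) := by
        rintro n p ⟨f, hf, rfl⟩
        exact ⟨ind ω₁.ker π₁ ↑n f, hU ↑n f hf, by
          show Φ (ind ω₁.ker π₁ ↑n f) = _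
          rw [key1 n f]
          rfl⟩
      have hSinv : ∀ p ∈ U.map (Φ : indSubmodule ω₁.ker π₁ →ₗ[ℂ] V₁ × V₁),
          ((p.2 : V₁), π₁ g₄ p.1) ∈ U.map (Φ : indSubmodule ω₁.ker π₁ →ₗ[ℂ] V₁ × V₁) := by
        rintro p ⟨f, hf, rfl⟩
        exact ⟨ind ω₁.ker π₁ g₀ f, hU g₀ f hf, by
          show Φ (ind ω₁.ker π₁ g₀ f) = _
          rw [key2 f]
          rfl⟩
      rcases pair_cases hπ₁ hρirr hneqv _ hPinv with h | h | h | h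
      · left
        rw [eq_bot_iff]
        intro f hf
        have : Φ f ∈ U.map (Φ : indSubmodule ω₁.ker π₁ →ₗ[ℂ] V₁ × V₁) := ⟨f, hf, rfl⟩
        rw [h] at this
        have h0 : Φ f = 0 := this
        simpa using Φ.injective (by rw [h0, map_zero])
      · exfalso
        obtain ⟨v, hv⟩ := hπ₁.1
        have hvP : (v, (0:V₁)) ∈ U.map (Φ : indSubmodule ω₁.ker π₁ →ₗ[ℂ] V₁ × V₁) := by
          rw [h]
          exact ⟨Submodule.mem_top, rfl⟩
        have h2 := hSinv _ hvP
        rw [h] at h2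
        have : π₁ g₄ v = 0 := h2.2
        apply hv
        have := congrArg (π₁ g₄⁻¹) this
        rwa [map_zero, ← Module.End.mul_apply, ← map_mul, inv_mul_cancel, map_one,
          Module.End.one_apply] at this
      · exfalso
        obtain ⟨v, hv⟩ := hπ₁.1
        have hvP : ((0:V₁), v) ∈ U.map (Φ : indSubmodule ω₁.ker π₁ →ₗ[ℂ] V₁ × V₁) := by
          rw [h]
          exact ⟨rfl, Submodule.mem_top⟩
        have h2 := hSinv _ hvP
        rw [h] at h2
        exact hv h2.1
      · right
        rw [eq_top_iff]
        rintro f -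
        have : Φ f ∈ U.map (Φ : indSubmodule ω₁.ker π₁ →ₗ[ℂ] V₁ × V₁) := by
          rw [h]; trivial
        obtain ⟨u, hu, huf⟩ := this
        rwa [← Φ.injective huf]
  · -- ## Statement 3 : irreducibility of the restriction to N
    refine ⟨hπ₁.1, ?_⟩
    intro U hU
    by_cases hUb : U = ⊥
    · exact Or.inl hUb
    by_cases hUt : U = ⊤
    · exact Or.inr hUt
    exfalso
    obtain ⟨h, hh1, hh2⟩ := hh
    set Hh : ω₁.ker := ⟨h, MonoidHom.mem_ker.mpr hh1⟩ with hHh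
    have mulapp : ∀ (a b : ω₁.ker) (u : V₁), π₁ a (π₁ b u) = π₁ (a * b) u := by
      intro a b u
      rw [map_mul]
      rfl
    have hUinv1 : ∀ x : ω₁.ker, ω₂ ↑x = 1 → ∀ v ∈ U, π₁ x v ∈ U := by
      intro x hx v hv
      have hxN : (↑x : G) ∈ N := hNN ↑x (MonoidHom.mem_ker.mp x.2) hx
      have := hU ⟨↑x, hxN⟩ v hv
      have harg : (Subgroup.inclusion (fun y hy => MonoidHom.mem_ker.mpr (hω₁N y hy))
          (⟨↑x, hxN⟩ : N)) = x := by
        apply Subtype.ext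
        rfl
      rw [MonoidHom.comp_apply, harg] at this
      exact this
    set U' := U.map (π₁ Hh : V₁ →ₗ[ℂ] V₁) with hU'def
    have hU'inv1 : ∀ x : ω₁.ker, ω₂ ↑x = 1 → ∀ v ∈ U', π₁ x v ∈ U' := by
      rintro x hx v ⟨u, hu, rfl⟩
      have hyx : ω₂ (↑(Hh⁻¹ * x * Hh) : G) = 1 := by
        rw [Subgroup.coe_mul, Subgroup.coe_mul, Subgroup.coe_inv]
        rw [map_mul, map_mul, map_inv]
        rw [hx]
        show (ω₂ h)⁻¹ * 1 * ω₂ h = 1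
        rw [hh2]
        simp
      refine ⟨π₁ (Hh⁻¹ * x * Hh) u, hUinv1 _ hyx u hu, ?_⟩
      rw [mulapp, mulapp]
      congr 1
      group
    have hUto' : ∀ x : ω₁.ker, ω₂ ↑x = -1 → ∀ v ∈ U, π₁ x v ∈ U' := by
      intro x hx v hv
      have hyx : ω₂ (↑(Hh⁻¹ * x) : G) = 1 := by
        rw [Subgroup.coe_mul, Subgroup.coe_inv, map_mul, map_inv]
        show (ω₂ h)⁻¹ * ω₂ ↑x = 1
        rw [hx, hh2]
        simp
      refine ⟨π₁ (Hh⁻¹ * x) v, hUinv1 _ hyx v hv, ?_⟩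
      rw [mulapp]
      congr 1
      group
    have h'toU : ∀ x : ω₁.ker, ω₂ ↑x = -1 → ∀ v ∈ U', π₁ x v ∈ U := by
      rintro x hx v ⟨u, hu, rfl⟩
      rw [mulapp]
      have hyx : ω₂ (↑(x * Hh) : G) = 1 := by
        rw [Subgroup.coe_mul, map_mul]
        show ω₂ ↑x * ω₂ h = 1
        rw [hx, hh2]
        simp
      exact hUinv1 (x * Hh) hyx u hu
    have val2 : ∀ x : ω₁.ker, ω₂ ↑x = 1 ∨ ω₂ ↑x = -1 := fun x => hv₂ ↑x
    have hsupinv : ∀ x : ω₁.ker, ∀ v ∈ U ⊔ U', π₁ x v ∈ U ⊔ U' := by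
      intro x v hv
      obtain ⟨a, ha, b, hb, rfl⟩ := Submodule.mem_sup.mp hv
      rw [map_add]
      rcases val2 x with hx | hx
      · exact Submodule.add_mem _ (Submodule.mem_sup_left (hUinv1 x hx a ha))
          (Submodule.mem_sup_right (hU'inv1 x hx b hb))
      · exact Submodule.add_mem _ (Submodule.mem_sup_right (hUto' x hx a ha))
          (Submodule.mem_sup_left (h'toU x hx b hb))
    have hinfinv : ∀ x : ω₁.ker, ∀ v ∈ U ⊓ U', π₁ x v ∈ U ⊓ U' := by
      intro x v hv
      rcases val2 x with hx | hx
      · exact ⟨hUinv1 x hx v hv.1, hU'inv1 x hx v hv.2⟩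
      · exact ⟨h'toU x hx v hv.2, hUto' x hx v hv.1⟩
    have h1 : U ⊔ U' = ⊤ := by
      rcases hπ₁.2 _ hsupinv with h1 | h1
      · exact absurd (le_bot_iff.mp (h1 ▸ le_sup_left)) hUb
      · exact h1
    have h2 : U ⊓ U' = ⊥ := by
      rcases hπ₁.2 _ hinfinv with h2 | h2
      · exact h2
      · exact absurd (top_unique (h2 ▸ inf_le_left)) hUt
    have hcompl : IsCompl U U' := ⟨disjoint_iff.mpr h2, codisjoint_iff.mpr h1⟩
    set pU := U.linearProjOfIsCompl U' hcompl with hpU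
    set T : V₁ →ₗ[ℂ] V₁ := 2 • (U.subtype.comp pU) - LinearMap.id with hT
    have happ : ∀ v : V₁, T v = 2 • ((pU v : V₁)) - v := by
      intro v
      rw [hT]
      simp [LinearMap.sub_apply, LinearMap.smul_apply, LinearMap.comp_apply]
    have hTu : ∀ u ∈ U, T u = u := by
      intro u hu
      rw [happ]
      rw [show pU u = ⟨u, hu⟩ from Submodule.linearProjOfIsCompl_apply_left hcompl ⟨u, hu⟩]
      show (2 : ℕ) • u - u = u
      rw [two_smul]
      abel
    have hTu' : ∀ u' ∈ U', T u' = -u' := by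
      intro u' hu'
      rw [happ]
      rw [show pU u' = 0 from Submodule.linearProjOfIsCompl_apply_right hcompl ⟨u', hu'⟩]
      simp
    have hdecomp : ∀ v : V₁, ∃ u ∈ U, ∃ u' ∈ U', v = u + u' := by
      intro v
      have : v ∈ U ⊔ U' := by rw [h1]; trivial
      obtain ⟨a, ha, b, hb, hab⟩ := Submodule.mem_sup.mp this
      exact ⟨a, ha, b, hb, hab.symm⟩
    have hinv : Function.Involutive T := by
      intro v
      obtain ⟨u, hu, u', hu', rfl⟩ := hdecomp v
      rw [map_add, hTu u hu, hTu' u' hu', map_add, hTu u hu, map_neg, hTu' u' hu', neg_neg]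
    apply htw
    refine ⟨LinearEquiv.ofInvolutive T hinv, ?_⟩
    intro x v
    show T (twist π₁ (ω₂.comp ω₁.ker.subtype) x v) = π₁ x (T v)
    rw [twist_apply]
    obtain ⟨u, hu, u', hu', rfl⟩ := hdecomp v
    rcases val2 x with hx | hx
    · have hc : (((ω₂.comp ω₁.ker.subtype) x : ℂˣ) : ℂ) = 1 := by
        show ((ω₂ ↑x : ℂˣ) : ℂ) = 1
        rw [hx, Units.val_one]
      rw [hc, one_smul]
      rw [map_add (π₁ x), map_add T, hTu _ (hUinv1 x hx u hu), hTu' _ (hU'inv1 x hx u' hu'),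
        map_add T, hTu u hu, hTu' u' hu', map_add (π₁ x), map_neg]
    · have hc : (((ω₂.comp ω₁.ker.subtype) x : ℂˣ) : ℂ) = -1 := by
        show ((ω₂ ↑x : ℂˣ) : ℂ) = -1
        rw [hx]
        simp
      rw [hc]
      rw [map_add (π₁ x), map_add T, hTu u hu, hTu' u' hu', map_add (π₁ x), map_neg,
        map_smul]
      rw [map_add T, hTu' _ (hUto' x hx u hu), hTu _ (h'toU x hx u' hu')]
      rw [neg_one_smul]
      abel
  · -- ## Statement 4 : restriction to N
    refine ⟨E, ?_⟩
    intro n f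
    have hEq := hE (Subgroup.inclusion (fun y hy => MonoidHom.mem_ker.mpr (hω₁N y hy)) n) f
    have hcoe : (↑(Subgroup.inclusion (fun y hy => MonoidHom.mem_ker.mpr (hω₁N y hy)) n) : G)
        = (↑n : G) := Subgroup.coe_inclusion _ n
    rw [hcoe] at hEq
    show E (ind ω₁.ker π₁ ↑n f) = _
    rw [hEq]
    apply Prod.ext
    · rfl
    · show twist π₁ (ω₂.comp ω₁.ker.subtype)
          (Subgroup.inclusion (fun y hy => MonoidHom.mem_ker.mpr (hω₁N y hy)) n) (E f).2
        = _
      rw [twist_apply]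
      have hc : (((ω₂.comp ω₁.ker.subtype)
          (Subgroup.inclusion (fun y hy => MonoidHom.mem_ker.mpr (hω₁N y hy)) n) : ℂˣ) : ℂ)
          = 1 := by
        show ((ω₂ (↑(Subgroup.inclusion (fun y hy => MonoidHom.mem_ker.mpr (hω₁N y hy)) n)) :
          ℂˣ) : ℂ) = 1
        rw [hcoe, hω₂N ↑n n.2, Units.val_one]
      rw [hc, one_smul]
      rfl


end RestrictionMult
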